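/- For every real w with −√2 < w < √2, lim_{k → ∞} (2π / k^{3/2}) · (k² / (2π(1 + 2w/√k))) · arctan( √((b_k − (1 + 2w/√k)) · ((1 + 2w/√k) − a_k)) / (√(a_k b_k) + 1 + 2w/√k) ) = √(2 − w²); that is, after centering at 1 and scaling space by 2/√k and density by k^{3/2}, the equilibrium density ψ_k converges pointwise to Wigner's semicircle density √(2 − w²)/π times π. -/

import Mathlib

/-- `s_k`, the square root of the left Mhaskar–Rakhmanov–Saff number. -/
noncomputable def sK (k : ℕ) : ℝ :=
  Real.exp ((2 * (k : ℝ) + 1) / (k : ℝ) ^ 2) -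
    Real.sqrt (Real.exp ((4 * (k : ℝ) + 2) / (k : ℝ) ^ 2) - Real.exp (2 / (k : ℝ)))

/-- `t_k`, the square root of the right Mhaskar–Rakhmanov–Saff number. -/
noncomputable def tK (k : ℕ) : ℝ :=
  Real.exp ((2 * (k : ℝ) + 1) / (k : ℝ) ^ 2) +
    Real.sqrt (Real.exp ((4 * (k : ℝ) + 2) / (k : ℝ) ^ 2) - Real.exp (2 / (k : ℝ)))

/-- The left edge `a_k = s_k²` of the support of the equilibrium measure. -/
noncomputable def aK (k : ℕ) : ℝ := (sK k) ^ 2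

/-- The right edge `b_k = t_k²` of the support of the equilibrium measure. -/
noncomputable def bK (k : ℕ) : ℝ := (tK k) ^ 2

/-- The density `ψ_k` of the equilibrium measure for the Stieltjes–Wigert-type weight. -/
noncomputable def psiK (k : ℕ) (x : ℝ) : ℝ :=
  ((k : ℝ) ^ 2 / (2 * Real.pi * x)) *
    Real.arctan (Real.sqrt ((bK k - x) * (x - aK k)) / (Real.sqrt (aK k * bK k) + x))

open Filter Topology

/-! ### Auxiliary definitions -/

noncomputable def EW (k : ℕ) : ℝ := Real.exp ((2 * (k : ℝ) + 1) / (k : ℝ) ^ 2)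

noncomputable def DW (k : ℕ) : ℝ :=
  Real.sqrt (Real.exp ((4 * (k : ℝ) + 2) / (k : ℝ) ^ 2) - Real.exp (2 / (k : ℝ)))

noncomputable def xW (w : ℝ) (k : ℕ) : ℝ := 1 + 2 * w / Real.sqrt k

noncomputable def yW (w : ℝ) (k : ℕ) : ℝ :=
  Real.sqrt ((bK k - xW w k) * (xW w k - aK k)) /
    (Real.sqrt (aK k * bK k) + 1 + 2 * w / Real.sqrt k)

/-! ### Basic limits -/

lemma exp_slope' : Tendsto (fun t : ℝ => (Real.exp t - 1) / t) (𝓝[≠] 0) (𝓝 1) := by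
  have h := Real.hasDerivAt_exp 0
  rw [hasDerivAt_iff_tendsto_slope] at h
  rw [Real.exp_zero] at h
  refine h.congr fun t => ?_
  simp [slope_def_field]

lemma arctan_slope' : Tendsto (fun t : ℝ => Real.arctan t / t) (𝓝[≠] 0) (𝓝 1) := by
  have h := Real.hasDerivAt_arctan 0
  rw [hasDerivAt_iff_tendsto_slope] at h
  norm_num at h
  refine h.congr fun t => ?_
  simp [slope_def_field]

lemma inv_nat_lim : Tendsto (fun k : ℕ => ((k:ℝ))⁻¹) atTop (𝓝 0) :=
  tendsto_inv_atTop_zero.comp tendsto_natCast_atTop_atTop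

lemma inv_sqrt_lim : Tendsto (fun k : ℕ => (Real.sqrt k)⁻¹) atTop (𝓝 0) :=
  tendsto_inv_atTop_zero.comp (by
    have h := (tendsto_rpow_atTop (by norm_num : (0:ℝ) < 1/2)).comp tendsto_natCast_atTop_atTop
    refine h.congr fun k => ?_
    rw [Function.comp_apply, Real.sqrt_eq_rpow])

lemma nat_exp_lim (c d : ℝ) (hc : 0 < c) (hd : 0 ≤ d) :
    Tendsto (fun k : ℕ => (k : ℝ) * (Real.exp (c / k + d / (k:ℝ)^2) - 1)) atTop (𝓝 c) := by
  set t : ℕ → ℝ := fun k => c / k + d / (k:ℝ)^2 with ht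
  have htpos : ∀ᶠ k : ℕ in atTop, 0 < t k := by
    filter_upwards [eventually_ge_atTop 1] with k hk
    have hk0 : (0:ℝ) < k := by exact_mod_cast hk
    have : 0 < c / k := div_pos hc hk0
    have : 0 ≤ d / (k:ℝ)^2 := div_nonneg hd (by positivity)
    simp only [ht]; positivity
  have ht0 : Tendsto t atTop (𝓝 0) := by
    have h1 : Tendsto (fun k : ℕ => c / (k:ℝ)) atTop (𝓝 0) := by
      simpa [div_eq_mul_inv] using inv_nat_lim.const_mul c
    have h2 : Tendsto (fun k : ℕ => d / (k:ℝ)^2) atTop (𝓝 0) := by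
      have := (inv_nat_lim.mul inv_nat_lim).const_mul d
      simp only [mul_zero] at this
      refine this.congr fun k => by rw [div_eq_mul_inv]; ring
    simpa using h1.add h2
  have htne : Tendsto t atTop (𝓝[≠] 0) := by
    rw [tendsto_nhdsWithin_iff]
    exact ⟨ht0, htpos.mono fun k hk => ne_of_gt hk⟩
  have hslope : Tendsto (fun k : ℕ => (Real.exp (t k) - 1) / t k) atTop (𝓝 1) :=
    exp_slope'.comp htne
  have hkt : Tendsto (fun k : ℕ => (k:ℝ) * t k) atTop (𝓝 c) := by
    have h2 : Tendsto (fun k : ℕ => d / (k:ℝ)) atTop (𝓝 0) := by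
      simpa [div_eq_mul_inv] using inv_nat_lim.const_mul d
    have := (tendsto_const_nhds (x := c)).add h2
    rw [add_zero] at this
    refine this.congr' ?_
    filter_upwards [eventually_ge_atTop 1] with k hk
    have hk0 : (k:ℝ) ≠ 0 := by positivity
    simp only [ht]
    field_simp
  have := hslope.mul hkt
  rw [one_mul] at this
  refine this.congr' ?_
  filter_upwards [htpos] with k hk
  show (Real.exp (t k) - 1) / t k * (k * t k) = k * (Real.exp (t k) - 1)
  field_simp

/-! ### Structure lemmas -/

lemma EW_sq (k : ℕ) : EW k ^ 2 = Real.exp ((4 * (k:ℝ) + 2) / (k:ℝ)^2) := by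
  unfold EW
  rw [sq, ← Real.exp_add]
  congr 1
  ring

lemma DW_sq (k : ℕ) (hk : 1 ≤ k) : DW k ^ 2 = EW k ^ 2 - Real.exp (2 / (k:ℝ)) := by
  have hk0 : (0:ℝ) < k := by exact_mod_cast hk
  unfold DW
  rw [EW_sq, Real.sq_sqrt]
  have : 2 / (k:ℝ) ≤ (4 * (k:ℝ) + 2) / (k:ℝ)^2 := by
    rw [div_le_div_iff₀ hk0 (by positivity)]
    nlinarith
  have := Real.exp_le_exp.mpr this
  linarith

lemma bK_eq (k : ℕ) (hk : 1 ≤ k) :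
    bK k = 2 * EW k ^ 2 - Real.exp (2 / (k:ℝ)) + 2 * EW k * DW k := by
  have h := DW_sq k hk
  unfold bK tK
  show (EW k + DW k) ^ 2 = _
  linear_combination h

lemma aK_eq (k : ℕ) (hk : 1 ≤ k) :
    aK k = 2 * EW k ^ 2 - Real.exp (2 / (k:ℝ)) - 2 * EW k * DW k := by
  have h := DW_sq k hk
  unfold aK sK
  show (EW k - DW k) ^ 2 = _
  linear_combination h

lemma sqrt_ab (k : ℕ) (hk : 1 ≤ k) :
    Real.sqrt (aK k * bK k) = Real.exp (2 / (k:ℝ)) := by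
  have h : aK k * bK k = (Real.exp (2 / (k:ℝ)))^2 := by
    have hd := DW_sq k hk
    unfold aK bK sK tK
    show (EW k - DW k)^2 * (EW k + DW k)^2 = _
    linear_combination (DW k ^ 2 - EW k ^ 2 - Real.exp (2/(k:ℝ))) * hd
  rw [h, Real.sqrt_sq (Real.exp_pos _).le]

/-! ### Asymptotic lemmas -/

lemma tendsto_e2 : Tendsto (fun k : ℕ => Real.exp (2 / (k:ℝ))) atTop (𝓝 1) := by
  have harg : Tendsto (fun k : ℕ => 2 / (k:ℝ)) atTop (𝓝 0) := by
    simpa [div_eq_mul_inv] using inv_nat_lim.const_mul 2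
  have := (Real.continuous_exp.tendsto 0).comp harg
  simpa using (show Tendsto (fun k : ℕ => Real.exp (2 / (k:ℝ))) atTop (𝓝 (Real.exp 0)) from this)

lemma tendsto_EW : Tendsto EW atTop (𝓝 1) := by
  have harg : Tendsto (fun k : ℕ => (2 * (k:ℝ) + 1) / (k:ℝ)^2) atTop (𝓝 0) := by
    have h := (inv_nat_lim.const_mul 2).add (inv_nat_lim.mul inv_nat_lim)
    simp only [mul_zero, zero_mul, add_zero, zero_add] at h
    refine h.congr' ?_
    filter_upwards [eventually_ge_atTop 1] with k hk
    have hk0 : (k:ℝ) ≠ 0 := by positivity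
    field_simp
  have := (Real.continuous_exp.tendsto 0).comp harg
  simpa [EW] using (show Tendsto EW atTop (𝓝 (Real.exp 0)) from this)

lemma tendsto_alpha :
    Tendsto (fun k : ℕ => (k:ℝ) * (EW k ^ 2 - Real.exp (2 / (k:ℝ)))) atTop (𝓝 2) := by
  have h22 := nat_exp_lim 2 2 (by norm_num) (by norm_num)
  have := tendsto_e2.mul h22
  rw [one_mul] at this
  refine this.congr' ?_
  filter_upwards [eventually_ge_atTop 1] with k hk
  have hk0 : (k:ℝ) ≠ 0 := by positivity
  have hE : EW k ^ 2 = Real.exp (2/(k:ℝ)) * Real.exp (2/(k:ℝ) + 2/(k:ℝ)^2) := by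
    rw [EW_sq, ← Real.exp_add]
    congr 1
    field_simp
    ring
  rw [hE]
  ring

lemma tendsto_sD : Tendsto (fun k : ℕ => Real.sqrt k * DW k) atTop (𝓝 (Real.sqrt 2)) := by
  have h := (Real.continuous_sqrt.tendsto 2).comp tendsto_alpha
  refine h.congr fun k => ?_
  rw [Function.comp_apply, Real.sqrt_mul (Nat.cast_nonneg k)]
  unfold DW
  rw [EW_sq]

lemma tendsto_beta :
    Tendsto (fun k : ℕ => (k:ℝ) * (2 * EW k ^ 2 - Real.exp (2 / (k:ℝ)) - 1)) atTop (𝓝 6) := by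
  have h42 := (nat_exp_lim 4 2 (by norm_num) (by norm_num)).const_mul 2
  have h20 : Tendsto (fun k : ℕ => (k:ℝ) * (Real.exp (2 / (k:ℝ)) - 1)) atTop (𝓝 2) := by
    have := nat_exp_lim 2 0 (by norm_num) (by norm_num)
    simpa using this
  have h := h42.sub h20
  norm_num at h
  refine h.congr' ?_
  filter_upwards [eventually_ge_atTop 1] with k hk
  have hk0 : (k:ℝ) ≠ 0 := by positivity
  have hE : EW k ^ 2 = Real.exp (4/(k:ℝ) + 2/(k:ℝ)^2) := by
    rw [EW_sq]
    congr 1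
    field_simp
  rw [hE]
  ring

theorem equilibrium_density_semicircle_limit (w : ℝ)
    (hw₁ : -Real.sqrt 2 < w) (hw₂ : w < Real.sqrt 2) :
    Tendsto
      (fun k : ℕ =>
        (2 * Real.pi / (k : ℝ) ^ ((3 : ℝ) / 2)) *
          ((k : ℝ) ^ 2 / (2 * Real.pi * (1 + 2 * w / Real.sqrt k))) *
          Real.arctan
            (Real.sqrt ((bK k - (1 + 2 * w / Real.sqrt k)) *
                ((1 + 2 * w / Real.sqrt k) - aK k)) /
              (Real.sqrt (aK k * bK k) + 1 + 2 * w / Real.sqrt k)))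
      atTop (nhds (Real.sqrt (2 - w ^ 2))) := by
  have hsq2 : Real.sqrt 2 ^ 2 = 2 := Real.sq_sqrt (by norm_num)
  have hw2 : w ^ 2 < 2 := by nlinarith [Real.sqrt_nonneg 2]
  -- √k · (2E² - e - 1) → 0
  have hbs : Tendsto (fun k : ℕ =>
      Real.sqrt k * (2 * EW k ^ 2 - Real.exp (2 / (k:ℝ)) - 1)) atTop (𝓝 0) := by
    have h := tendsto_beta.mul inv_sqrt_lim
    rw [mul_zero] at h
    refine h.congr' ?_
    filter_upwards [eventually_ge_atTop 1] with k hk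
    have hk0 : (0:ℝ) < k := by exact_mod_cast hk
    have hss : Real.sqrt k * Real.sqrt k = (k:ℝ) := Real.mul_self_sqrt hk0.le
    have hs : Real.sqrt k ≠ 0 := ne_of_gt (Real.sqrt_pos.mpr hk0)
    field_simp
    linear_combination (-(2 * EW k ^ 2 - Real.exp (2 / (k:ℝ)) - 1)) * hss
  -- √k·(b - x) → 2√2 - 2w
  have hγ : Tendsto (fun k : ℕ => Real.sqrt k * (bK k - xW w k)) atTop
      (𝓝 (2 * Real.sqrt 2 - 2 * w)) := by
    have h := (hbs.add ((tendsto_EW.mul tendsto_sD).const_mul 2)).sub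
      (tendsto_const_nhds (x := 2 * w))
    rw [show (0:ℝ) + 2 * (1 * Real.sqrt 2) - 2 * w = 2 * Real.sqrt 2 - 2 * w by ring] at h
    refine h.congr' ?_
    filter_upwards [eventually_ge_atTop 1] with k hk
    have hk0 : (0:ℝ) < k := by exact_mod_cast hk
    have hs : Real.sqrt k ≠ 0 := ne_of_gt (Real.sqrt_pos.mpr hk0)
    rw [bK_eq k hk]
    unfold xW
    field_simp
    ring
  -- √k·(x - a) → 2√2 + 2w
  have hδ : Tendsto (fun k : ℕ => Real.sqrt k * (xW w k - aK k)) atTop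
      (𝓝 (2 * Real.sqrt 2 + 2 * w)) := by
    have h := (((tendsto_EW.mul tendsto_sD).const_mul 2).sub hbs).add
      (tendsto_const_nhds (x := 2 * w))
    rw [show 2 * (1 * Real.sqrt 2) - 0 + 2 * w = 2 * Real.sqrt 2 + 2 * w by ring] at h
    refine h.congr' ?_
    filter_upwards [eventually_ge_atTop 1] with k hk
    have hk0 : (0:ℝ) < k := by exact_mod_cast hk
    have hs : Real.sqrt k ≠ 0 := ne_of_gt (Real.sqrt_pos.mpr hk0)
    rw [aK_eq k hk]
    unfold xW
    field_simp
    ring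
  -- √k·√((b-x)(x-a)) → 2√(2-w²)
  have hQ : Tendsto (fun k : ℕ =>
      Real.sqrt k * Real.sqrt ((bK k - xW w k) * (xW w k - aK k))) atTop
      (𝓝 (2 * Real.sqrt (2 - w ^ 2))) := by
    have h := (Real.continuous_sqrt.tendsto _).comp (hγ.mul hδ)
    have hval : Real.sqrt ((2 * Real.sqrt 2 - 2 * w) * (2 * Real.sqrt 2 + 2 * w))
        = 2 * Real.sqrt (2 - w ^ 2) := by
      rw [show (2 * Real.sqrt 2 - 2 * w) * (2 * Real.sqrt 2 + 2 * w) = 2^2 * (2 - w^2) by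
        nlinarith [hsq2]]
      rw [Real.sqrt_mul (by positivity), Real.sqrt_sq (by norm_num : (0:ℝ) ≤ 2)]
    rw [hval] at h
    refine h.congr fun k => ?_
    rw [Function.comp_apply, ← Real.sqrt_mul (Nat.cast_nonneg k)]
    congr 1
    conv_rhs => rw [← Real.mul_self_sqrt (Nat.cast_nonneg k)]
    ring
  -- x → 1
  have hxlim : Tendsto (xW w) atTop (𝓝 1) := by
    have h := (tendsto_const_nhds (x := (1:ℝ))).add (inv_sqrt_lim.const_mul (2 * w))
    rw [show (1:ℝ) + 2 * w * 0 = 1 by ring] at h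
    refine h.congr fun k => ?_
    unfold xW
    rw [div_eq_mul_inv]
  -- denominator → 2
  have hden : Tendsto (fun k : ℕ =>
      Real.sqrt (aK k * bK k) + 1 + 2 * w / Real.sqrt k) atTop (𝓝 2) := by
    have h := (tendsto_e2.add (tendsto_const_nhds (x := (1:ℝ)))).add
      (inv_sqrt_lim.const_mul (2 * w))
    rw [show (1:ℝ) + 1 + 2 * w * 0 = 2 by ring] at h
    refine h.congr' ?_
    filter_upwards [eventually_ge_atTop 1] with k hk
    rw [sqrt_ab k hk]
    simp [div_eq_mul_inv]
  -- √k · y → √(2 - w²)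
  have hsy : Tendsto (fun k : ℕ => Real.sqrt k * yW w k) atTop
      (𝓝 (Real.sqrt (2 - w ^ 2))) := by
    have h := hQ.div hden two_ne_zero
    rw [show 2 * Real.sqrt (2 - w ^ 2) / 2 = Real.sqrt (2 - w ^ 2) by ring] at h
    refine h.congr fun k => ?_
    exact mul_div_assoc _ _ _
  -- y → 0
  have hy0 : Tendsto (yW w) atTop (𝓝 0) := by
    have h := hsy.mul inv_sqrt_lim
    rw [mul_zero] at h
    refine h.congr' ?_
    filter_upwards [eventually_ge_atTop 1] with k hk
    have hk0 : (0:ℝ) < k := by exact_mod_cast hk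
    have hs : Real.sqrt k ≠ 0 := ne_of_gt (Real.sqrt_pos.mpr hk0)
    field_simp
  -- y is eventually positive
  have hypos : ∀ᶠ k : ℕ in atTop, 0 < yW w k := by
    have hpos : (0:ℝ) < Real.sqrt (2 - w ^ 2) := Real.sqrt_pos.mpr (by linarith)
    filter_upwards [hsy.eventually (eventually_gt_nhds hpos), eventually_ge_atTop 1]
      with k hky hk
    have hk0 : (0:ℝ) < k := by exact_mod_cast hk
    have hs : (0:ℝ) < Real.sqrt k := Real.sqrt_pos.mpr hk0
    rcases mul_pos_iff.mp hky with ⟨_, h⟩ | ⟨h1, _⟩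
    · exact h
    · exact absurd hs (not_lt.mpr h1.le)
  -- arctan(y)/y → 1
  have harc : Tendsto (fun k : ℕ => Real.arctan (yW w k) / yW w k) atTop (𝓝 1) := by
    refine arctan_slope'.comp ?_
    rw [tendsto_nhdsWithin_iff]
    exact ⟨hy0, hypos.mono fun k hk => ne_of_gt hk⟩
  -- x is eventually positive
  have hxpos : ∀ᶠ k : ℕ in atTop, 0 < xW w k :=
    hxlim.eventually (eventually_gt_nhds (by norm_num : (0:ℝ) < 1))
  -- assemble
  have hG : Tendsto (fun k : ℕ =>
      (Real.sqrt k * yW w k) * (Real.arctan (yW w k) / yW w k) * (xW w k)⁻¹) atTop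
      (𝓝 (Real.sqrt (2 - w ^ 2))) := by
    have h := (hsy.mul harc).mul (hxlim.inv₀ one_ne_zero)
    simpa using h
  refine Tendsto.congr' ?_ hG
  filter_upwards [eventually_ge_atTop 1, hypos, hxpos] with k hk hy hx
  have hk0 : (0:ℝ) < k := by exact_mod_cast hk
  have hs : (0:ℝ) < Real.sqrt k := Real.sqrt_pos.mpr hk0
  have hss : Real.sqrt k * Real.sqrt k = (k:ℝ) := Real.mul_self_sqrt hk0.le
  have h32 : ((k:ℝ)) ^ ((3:ℝ)/2) = (k:ℝ) * Real.sqrt k := by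
    rw [show (3:ℝ)/2 = 1 + 1/2 by norm_num, Real.rpow_add hk0, Real.rpow_one,
      ← Real.sqrt_eq_rpow]
  show (Real.sqrt k * yW w k) * (Real.arctan (yW w k) / yW w k) * (xW w k)⁻¹
      = 2 * Real.pi / (k:ℝ) ^ ((3:ℝ)/2) * ((k:ℝ)^2 / (2 * Real.pi * xW w k)) *
        Real.arctan (yW w k)
  rw [h32]
  have hyne : yW w k ≠ 0 := ne_of_gt hy
  have hxne : xW w k ≠ 0 := ne_of_gt hx
  have hpi : Real.pi ≠ 0 := Real.pi_ne_zero
  field_simp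
  linear_combination hss
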